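/- Every vector subspace W of a finite-dimensional normed vector space V over a complete discretely valued non-archimedean field is strictly closed: for every v ∈ V there exists w ∈ W with ||v - w|| = inf_{w' ∈ W} ||v - w'||. -/

import Mathlib

open Filter

/-- Every subspace of a finite-dimensional normed vector space over a complete discretely valued non-archimedean field is strictly closed. -/
theorem stmt8 {F V : Type*} [Field F] [AddCommGroup V] [Module F V] [FiniteDimensional F V]
    (v : AbsoluteValue F ℝ) (hna : ∀ x y : F, v (x + y) ≤ max (v x) (v y))
    (σ : ℝ) (hσ0 : 0 < σ) (hσ1 : σ < 1)
    (hdisc : ∀ x : F, x ≠ 0 → ∃ n : ℤ, v x = σ ^ n)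
    (hcomplete : ∀ a : ℕ → F,
      (∀ ε : ℝ, 0 < ε → ∃ n₀ : ℕ, ∀ m n : ℕ, n₀ ≤ m → n₀ ≤ n → v (a m - a n) < ε) →
      ∃ L : F, Tendsto (fun n => v (a n - L)) atTop (nhds 0))
    (N : V → ℝ)
    (hN0 : ∀ x : V, N x = 0 ↔ x = 0)
    (hNsmul : ∀ (c : F) (x : V), N (c • x) = v c * N x)
    (hNadd : ∀ x y : V, N (x + y) ≤ max (N x) (N y)) :
    ∀ (W : Submodule F V) (x : V), ∃ w ∈ W, N (x - w) = ⨅ w₂ : W, N (x - w₂) := by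
  classical
  have hN0' : N 0 = 0 := (hN0 0).mpr rfl
  have hNneg : ∀ y : V, N (-y) = N y := by
    intro y
    have h := hNsmul (-1) y
    rw [neg_one_smul] at h
    rw [h, v.map_neg, v.map_one, one_mul]
  have hNnn : ∀ y : V, 0 ≤ N y := by
    intro y
    have h := hNadd y (-y)
    rw [add_neg_cancel, hN0', hNneg, max_self] at h
    exact h
  have hNsub : ∀ y z : V, N (y - z) ≤ max (N y) (N z) := by
    intro y z
    rw [sub_eq_add_neg]
    simpa [hNneg] using hNadd y (-z)
  have hbdd : ∀ (U : Submodule F V) (y : V),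
      BddBelow (Set.range fun w₂ : U => N (y - w₂)) := by
    intro U y
    exact ⟨0, by rintro r ⟨w₂, rfl⟩; exact hNnn _⟩
  have attain : ∀ (U : Submodule F V) (y w : V), w ∈ U →
      (∀ w' ∈ U, N (y - w) ≤ N (y - w')) → N (y - w) = ⨅ w₂ : U, N (y - w₂) := by
    intro U y w hw hmin
    haveI : Nonempty U := ⟨0, U.zero_mem⟩
    exact le_antisymm (le_ciInf fun w₂ => hmin _ w₂.2) (ciInf_le (hbdd U y) ⟨w, hw⟩)
  have key : ∀ (l : List V) (U : Submodule F V), Submodule.span F {z | z ∈ l} = U →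
      ∀ y, ∃ w ∈ U, ∀ w' ∈ U, N (y - w) ≤ N (y - w') := by
    intro l
    induction l with
    | nil =>
      rintro U rfl y
      refine ⟨0, Submodule.zero_mem _, ?_⟩
      intro w' hw'
      have hempty : {z : V | z ∈ ([] : List V)} = ∅ := by ext z; simp
      rw [hempty, Submodule.span_empty, Submodule.mem_bot] at hw'
      rw [hw']
    | cons u t ih =>
      rintro U rfl y
      set W' : Submodule F V := Submodule.span F {z | z ∈ t} with hW'
      have ihW : ∀ y, ∃ w ∈ W', ∀ w' ∈ W', N (y - w) ≤ N (y - w') := fun y => ih W' rfl y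
      have hsetins : {z : V | z ∈ u :: t} = insert u {z : V | z ∈ t} := by ext z; simp
      by_cases hu : u ∈ W'
      · have hspan : Submodule.span F {z | z ∈ u :: t} = W' := by
          rw [hsetins, Submodule.span_insert_eq_span hu]
        rw [hspan]
        exact ihW y
      · choose p hpmem hpmin using ihW
        set g : V → ℝ := fun z => N (z - p z) with hg
        have hgnn : ∀ z, 0 ≤ g z := fun z => hNnn _
        have hgle : ∀ z, ∀ w' ∈ W', g z ≤ N (z - w') := fun z => hpmin z
        have hgadd : ∀ z₁ z₂, g (z₁ + z₂) ≤ max (g z₁) (g z₂) := by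
          intro z₁ z₂
          calc g (z₁ + z₂) ≤ N (z₁ + z₂ - (p z₁ + p z₂)) :=
                hgle _ _ (W'.add_mem (hpmem z₁) (hpmem z₂))
            _ = N ((z₁ - p z₁) + (z₂ - p z₂)) := by congr 1; abel
            _ ≤ max (g z₁) (g z₂) := hNadd _ _
        have hgsub : ∀ z₁ z₂, g (z₁ - z₂) ≤ max (g z₁) (g z₂) := by
          intro z₁ z₂
          calc g (z₁ - z₂) ≤ N (z₁ - z₂ - (p z₁ - p z₂)) :=
                hgle _ _ (W'.sub_mem (hpmem z₁) (hpmem z₂))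
            _ = N ((z₁ - p z₁) - (z₂ - p z₂)) := by congr 1; abel
            _ ≤ max (g z₁) (g z₂) := hNsub _ _
        have hgsmul_le : ∀ (c : F) (z : V), g (c • z) ≤ v c * g z := by
          intro c z
          calc g (c • z) ≤ N (c • z - c • p z) := hgle _ _ (W'.smul_mem c (hpmem z))
            _ = v c * g z := by rw [← smul_sub, hNsmul]
        have hg0 : g 0 = 0 := by
          refine le_antisymm ?_ (hgnn 0)
          have := hgle 0 0 W'.zero_mem
          simpa [hN0'] using this
        set β : ℝ := g u with hβ
        have hβpos : 0 < β := by
          rcases lt_or_eq_of_le (hgnn u) with h | h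
          · exact h
          · exfalso
            apply hu
            have h1 : u - p u = 0 := (hN0 _).mp h.symm
            have h2 : u = p u := sub_eq_zero.mp h1
            rw [h2]; exact hpmem u
        have hgsmul_u : ∀ c : F, g (c • u) = v c * β := by
          intro c
          rcases eq_or_ne c 0 with rfl | hc
          · simp [hg0]
          · refine le_antisymm (hgsmul_le c u) ?_
            have hvc : 0 < v c := v.pos hc
            have h1 : g u ≤ v c⁻¹ * g (c • u) := by
              calc g u = g (c⁻¹ • (c • u)) := by rw [smul_smul, inv_mul_cancel₀ hc, one_smul]
                _ ≤ v c⁻¹ * g (c • u) := hgsmul_le _ _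
            rw [map_inv₀] at h1
            calc v c * β ≤ v c * ((v c)⁻¹ * g (c • u)) :=
                  mul_le_mul_of_nonneg_left h1 hvc.le
              _ = g (c • u) := by field_simp
        have P1 : ∀ c c' : F, g (y - c • u) ≤ max (g (y - c' • u)) (v (c' - c) * β) := by
          intro c c'
          have h1 : y - c • u = (y - c' • u) + ((c' - c) • u) := by
            rw [sub_smul]; abel
          calc g (y - c • u) = g ((y - c' • u) + ((c' - c) • u)) := by rw [← h1]
            _ ≤ max (g (y - c' • u)) (g ((c' - c) • u)) := hgadd _ _
            _ = max (g (y - c' • u)) (v (c' - c) * β) := by rw [hgsmul_u]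
        have P2 : ∀ c c' : F, v (c' - c) * β ≤ max (g (y - c • u)) (g (y - c' • u)) := by
          intro c c'
          have h1 : (c' - c) • u = (y - c • u) - (y - c' • u) := by
            rw [sub_smul]; abel
          rw [← hgsmul_u, h1]
          exact hgsub _ _
        set d : ℝ := ⨅ c : F, g (y - c • u) with hd
        have hdbdd : BddBelow (Set.range fun c : F => g (y - c • u)) :=
          ⟨0, by rintro r ⟨c, rfl⟩; exact hgnn _⟩
        have hdnn : 0 ≤ d := le_ciInf fun c => hgnn _
        have hdle : ∀ c : F, d ≤ g (y - c • u) := fun c => ciInf_le hdbdd c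
        have hseq : ∀ n : ℕ, ∃ c : F, g (y - c • u) < d + 1 / ((n : ℝ) + 1) := by
          intro n
          apply exists_lt_of_ciInf_lt
          rw [← hd]
          have : (0 : ℝ) < 1 / ((n : ℝ) + 1) := by positivity
          linarith
        choose cs hcs using hseq
        suffices hc : ∃ c : F, g (y - c • u) ≤ d by
          obtain ⟨c, hc⟩ := hc
          refine ⟨c • u + p (y - c • u), ?_, ?_⟩
          · rw [hsetins, Submodule.mem_span_insert]
            exact ⟨c, p (y - c • u), hpmem _, rfl⟩
          · intro w' hw'
            rw [hsetins, Submodule.mem_span_insert] at hw'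
            obtain ⟨c₂, z₂, hz₂, rfl⟩ := hw'
            have e1 : y - (c • u + p (y - c • u)) = (y - c • u) - p (y - c • u) := by abel
            have e2 : y - (c₂ • u + z₂) = (y - c₂ • u) - z₂ := by abel
            rw [e1, e2]
            calc N ((y - c • u) - p (y - c • u)) = g (y - c • u) := rfl
              _ ≤ d := hc
              _ ≤ g (y - c₂ • u) := hdle c₂
              _ ≤ N ((y - c₂ • u) - z₂) := hgle _ _ hz₂
        rcases eq_or_lt_of_le hdnn with hd0 | hdpos
        · -- d = 0 : use completeness
          have hcauchy : ∀ ε : ℝ, 0 < ε → ∃ n₀ : ℕ, ∀ m n : ℕ, n₀ ≤ m → n₀ ≤ n →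
              v (cs m - cs n) < ε := by
            intro ε hε
            obtain ⟨n₀, hn₀⟩ := exists_nat_one_div_lt (mul_pos hε hβpos)
            refine ⟨n₀, fun m n hm hn => ?_⟩
            have hsmall : ∀ k : ℕ, n₀ ≤ k → g (y - cs k • u) < 1 / ((n₀ : ℝ) + 1) := by
              intro k hk
              have h1 := hcs k
              rw [← hd0] at h1
              have h2 : (1 : ℝ) / ((k : ℝ) + 1) ≤ 1 / ((n₀ : ℝ) + 1) := by
                apply one_div_le_one_div_of_le
                · positivity
                · exact_mod_cast Nat.succ_le_succ hk
              linarith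
            have h1 : v (cs m - cs n) * β ≤ max (g (y - cs n • u)) (g (y - cs m • u)) :=
              P2 (cs n) (cs m)
            have h2 : v (cs m - cs n) * β < ε * β := by
              have := max_lt (hsmall n hn) (hsmall m hm)
              calc v (cs m - cs n) * β ≤ _ := h1
                _ < 1 / ((n₀ : ℝ) + 1) := this
                _ < ε * β := hn₀
            exact lt_of_mul_lt_mul_right h2 hβpos.le
          obtain ⟨L, hL⟩ := hcomplete cs hcauchy
          refine ⟨L, ?_⟩
          rw [← hd0]
          refine le_of_forall_pos_le_add ?_
          intro ε hε
          have h1 : ∀ᶠ n in atTop, v (cs n - L) < ε / β :=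
            hL.eventually_lt_const (by positivity)
          obtain ⟨n₁, hn₁⟩ := eventually_atTop.mp h1
          obtain ⟨n₂, hn₂⟩ := exists_nat_one_div_lt hε
          set n : ℕ := max n₁ n₂ with hn
          have hA : g (y - cs n • u) < ε := by
            have h2 := hcs n
            rw [← hd0] at h2
            have h3 : (1 : ℝ) / ((n : ℝ) + 1) ≤ 1 / ((n₂ : ℝ) + 1) := by
              apply one_div_le_one_div_of_le
              · positivity
              · exact_mod_cast Nat.succ_le_succ (le_max_right n₁ n₂)
            linarith
          have hB : v (cs n - L) * β < ε := by
            have h2 := hn₁ n (le_max_left n₁ n₂)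
            calc v (cs n - L) * β < (ε / β) * β := by
                  exact mul_lt_mul_of_pos_right h2 hβpos
              _ = ε := div_mul_cancel₀ ε hβpos.ne'
          calc g (y - L • u) ≤ max (g (y - cs n • u)) (v (cs n - L) * β) := P1 L (cs n)
            _ ≤ ε := max_le hA.le hB.le
            _ = 0 + ε := (zero_add ε).symm
        · -- 0 < d : use discreteness
          set a : ℝ := d / β with ha'
          have ha : 0 < a := div_pos hdpos hβpos
          have haβ : a * β = d := div_mul_cancel₀ d hβpos.ne'
          have hσlog : Real.log σ < 0 := Real.log_neg hσ0 hσ1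
          set r : ℝ := Real.log a / Real.log σ with hr
          set k₀ : ℤ := ⌈r⌉ - 1 with hk₀def
          have hchar : ∀ k : ℤ, a < σ ^ k ↔ (k : ℝ) < r := by
            intro k
            have hpow : (0 : ℝ) < σ ^ k := zpow_pos hσ0 k
            rw [← Real.log_lt_log_iff ha hpow, Real.log_zpow, hr,
              lt_div_iff_of_neg hσlog]
          have hk₀ : (k₀ : ℝ) < r := by
            have := Int.ceil_lt_add_one r
            push_cast [hk₀def]
            linarith
          have hs : a < σ ^ k₀ := (hchar k₀).mpr hk₀
          have hmin : ∀ k : ℤ, a < σ ^ k → σ ^ k₀ ≤ σ ^ k := by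
            intro k hk
            have h1 : (k : ℝ) < r := (hchar k).mp hk
            have h2 : k ≤ k₀ := by
              have h3 : (k : ℝ) < (⌈r⌉ : ℝ) := lt_of_lt_of_le h1 (Int.le_ceil r)
              have h4 : k < ⌈r⌉ := by exact_mod_cast h3
              omega
            exact zpow_le_zpow_right_of_le_one₀ hσ0 hσ1.le h2
          have hsβ : d < σ ^ k₀ * β := by
            have := mul_lt_mul_of_pos_right hs hβpos
            rwa [haβ] at this
          obtain ⟨M, hM⟩ := exists_nat_one_div_lt (sub_pos.mpr hsβ)
          have hclose : ∀ n : ℕ, M ≤ n → v (cs n - cs M) ≤ a := by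
            intro n hn
            have h2 : v (cs n - cs M) * β ≤ max (g (y - cs M • u)) (g (y - cs n • u)) :=
              P2 (cs M) (cs n)
            have hgM : g (y - cs M • u) < d + 1 / ((M : ℝ) + 1) := hcs M
            have hgn : g (y - cs n • u) < d + 1 / ((M : ℝ) + 1) := by
              have h3 : (1 : ℝ) / ((n : ℝ) + 1) ≤ 1 / ((M : ℝ) + 1) := by
                apply one_div_le_one_div_of_le
                · positivity
                · exact_mod_cast Nat.succ_le_succ hn
              have := hcs n
              linarith
            have h4 : v (cs n - cs M) * β < σ ^ k₀ * β := by
              calc v (cs n - cs M) * β ≤ _ := h2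
                _ < d + 1 / ((M : ℝ) + 1) := max_lt hgM hgn
                _ < σ ^ k₀ * β := by linarith
            have h5 : v (cs n - cs M) < σ ^ k₀ := lt_of_mul_lt_mul_right h4 hβpos.le
            rcases eq_or_ne (cs n) (cs M) with he | he
            · rw [he, sub_self, v.map_zero]
              exact ha.le
            · obtain ⟨k, hk⟩ := hdisc _ (sub_ne_zero.mpr he)
              rw [hk] at h5 ⊢
              by_contra hcon
              push_neg at hcon
              exact absurd (hmin k hcon) (not_le.mpr h5)
          refine ⟨cs M, ?_⟩
          refine le_of_forall_pos_le_add ?_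
          intro ε hε
          obtain ⟨n₂, hn₂⟩ := exists_nat_one_div_lt hε
          set n : ℕ := max M n₂ with hn
          have h5 : g (y - cs M • u) ≤ max (g (y - cs n • u)) (v (cs n - cs M) * β) :=
            P1 (cs M) (cs n)
          have h6 : v (cs n - cs M) * β ≤ d := by
            have h7 := hclose n (le_max_left M n₂)
            calc v (cs n - cs M) * β ≤ a * β := mul_le_mul_of_nonneg_right h7 hβpos.le
              _ = d := haβ
          have h7 : g (y - cs n • u) < d + ε := by
            have h8 := hcs n
            have h9 : (1 : ℝ) / ((n : ℝ) + 1) ≤ 1 / ((n₂ : ℝ) + 1) := by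
              apply one_div_le_one_div_of_le
              · positivity
              · exact_mod_cast Nat.succ_le_succ (le_max_right M n₂)
            linarith
          calc g (y - cs M • u) ≤ max (g (y - cs n • u)) (v (cs n - cs M) * β) := h5
            _ ≤ d + ε := max_le h7.le (by linarith)
  intro W x
  obtain ⟨s, hs⟩ := IsNoetherian.noetherian W
  obtain ⟨w, hw, hmin⟩ := key s.toList W (by rw [← hs]; congr 1; ext z; simp) x
  exact ⟨w, hw, attain W x w hw hmin⟩
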